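/- For any Γ ≥ σ₁(M*), the function f(U) = (1/2)‖UUᵀ - M*‖_F² is 12Γ^{1/2}-Hessian Lipschitz inside {U : ‖U‖² < Γ}: for all U, V in this region and all Z with ‖Z‖_F ≤ 1, |∇²f(U)(Z,Z) - ∇²f(V)(Z,Z)| ≤ 12Γ^{1/2}‖U - V‖_F. -/

import Mathlib

open Matrix

/-- The Frobenius norm of a real matrix. -/
noncomputable def frob {m n : ℕ} (A : Matrix (Fin m) (Fin n) ℝ) : ℝ :=
  Real.sqrt (∑ i, ∑ j, (A i j) ^ 2)

/-- The spectral (operator) norm of a real matrix. -/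
noncomputable def spec {m n : ℕ} (A : Matrix (Fin m) (Fin n) ℝ) : ℝ :=
  ‖LinearMap.toContinuousLinearMap (Matrix.toEuclideanLin A)‖

/-- The trace inner product `⟨A, B⟩ = tr(AᵀB)`. -/
def mip {m n : ℕ} (A B : Matrix (Fin m) (Fin n) ℝ) : ℝ :=
  (Aᵀ * B).trace

/-- The Hessian quadratic form of `f(U) = (1/2)‖UUᵀ - M‖_F²`:
`∇²f(U)(Z,Z) = ‖UZᵀ + ZUᵀ‖_F² + 2⟨UUᵀ - M, ZZᵀ⟩`. -/
noncomputable def hessf {d r : ℕ} (M : Matrix (Fin d) (Fin d) ℝ)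
    (U Z : Matrix (Fin d) (Fin r) ℝ) : ℝ :=
  frob (U * Zᵀ + Z * Uᵀ) ^ 2 + 2 * mip (U * Uᵀ - M) (Z * Zᵀ)

section aux
variable {m n p : ℕ}

noncomputable def emb (A : Matrix (Fin m) (Fin n) ℝ) : EuclideanSpace ℝ (Fin m × Fin n) :=
  WithLp.toLp 2 (fun q : Fin m × Fin n => A q.1 q.2)

lemma emb_add (A B : Matrix (Fin m) (Fin n) ℝ) : emb (A + B) = emb A + emb B := rfl
lemma emb_sub (A B : Matrix (Fin m) (Fin n) ℝ) : emb (A - B) = emb A - emb B := rfl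

lemma frob_eq_norm_emb (A : Matrix (Fin m) (Fin n) ℝ) : frob A = ‖emb A‖ := by
  rw [EuclideanSpace.norm_eq, frob]
  congr 1
  rw [Fintype.sum_prod_type]
  exact Finset.sum_congr rfl fun i _ => Finset.sum_congr rfl fun j _ => by
    simp [emb, Real.norm_eq_abs, sq_abs]

lemma mip_eq_inner (A B : Matrix (Fin m) (Fin n) ℝ) : mip A B = inner ℝ (emb A) (emb B) := by
  simp only [mip, Matrix.trace, Matrix.diag, Matrix.mul_apply, Matrix.transpose_apply]
  rw [PiLp.inner_apply, Fintype.sum_prod_type, Finset.sum_comm]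
  exact Finset.sum_congr rfl fun i _ => Finset.sum_congr rfl fun j _ => by
    simp [emb, RCLike.inner_apply, mul_comm]

lemma frob_nonneg (A : Matrix (Fin m) (Fin n) ℝ) : 0 ≤ frob A := Real.sqrt_nonneg _

lemma abs_mip_le (A B : Matrix (Fin m) (Fin n) ℝ) : |mip A B| ≤ frob A * frob B := by
  rw [mip_eq_inner, frob_eq_norm_emb, frob_eq_norm_emb]
  exact abs_real_inner_le_norm _ _

lemma frob_add_le (A B : Matrix (Fin m) (Fin n) ℝ) : frob (A + B) ≤ frob A + frob B := by
  rw [frob_eq_norm_emb, frob_eq_norm_emb, frob_eq_norm_emb, emb_add]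
  exact norm_add_le _ _

lemma frob_transpose (A : Matrix (Fin m) (Fin n) ℝ) : frob Aᵀ = frob A := by
  rw [frob, frob, Finset.sum_comm]
  rfl

lemma frob_mul_le (A : Matrix (Fin m) (Fin n) ℝ) (B : Matrix (Fin n) (Fin p) ℝ) :
    frob (A * B) ≤ frob A * frob B := by
  rw [frob, frob, frob, ← Real.sqrt_mul (by positivity)]
  apply Real.sqrt_le_sqrt
  calc ∑ i, ∑ j, ((A * B) i j) ^ 2
      ≤ ∑ i, ∑ j, (∑ k, (A i k) ^ 2) * (∑ k, (B k j) ^ 2) := by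
        refine Finset.sum_le_sum fun i _ => Finset.sum_le_sum fun j _ => ?_
        simpa [Matrix.mul_apply] using
          Finset.sum_mul_sq_le_sq_mul_sq Finset.univ (fun k => A i k) (fun k => B k j)
    _ = (∑ i, ∑ k, (A i k) ^ 2) * ∑ k, ∑ j, (B k j) ^ 2 := by
        rw [Finset.sum_mul_sum]
        refine Finset.sum_congr rfl fun i _ => ?_
        rw [← Finset.mul_sum, ← Finset.mul_sum, Finset.sum_comm]

lemma spec_nonneg (A : Matrix (Fin m) (Fin n) ℝ) : 0 ≤ spec A := norm_nonneg _

lemma frob_mul_transpose_le (A : Matrix (Fin m) (Fin n) ℝ) (B : Matrix (Fin p) (Fin n) ℝ) :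
    frob (A * Bᵀ) ≤ spec A * frob B := by
  have h : ∑ i, ∑ j, ((A * Bᵀ) i j) ^ 2 ≤ (spec A * frob B) ^ 2 := by
    have swap : ∑ i, ∑ j, ((A * Bᵀ) i j) ^ 2 = ∑ j, ∑ i, ((A * Bᵀ) i j) ^ 2 :=
      Finset.sum_comm
    rw [swap]
    have key : ∀ j : Fin p, ∑ i, ((A * Bᵀ) i j) ^ 2 ≤ spec A ^ 2 * ∑ k, (B j k) ^ 2 := by
      intro j
      set x : EuclideanSpace ℝ (Fin n) := (WithLp.equiv 2 (Fin n → ℝ)).symm (fun k => B j k)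
      have hx : ‖x‖ ^ 2 = ∑ k, (B j k) ^ 2 := by
        rw [EuclideanSpace.norm_eq, Real.sq_sqrt (by positivity)]
        exact Finset.sum_congr rfl fun k _ => by simp [x, Real.norm_eq_abs, sq_abs]
      have hAx : ‖Matrix.toEuclideanLin A x‖ ≤ spec A * ‖x‖ := by
        have := (LinearMap.toContinuousLinearMap (Matrix.toEuclideanLin A)).le_opNorm x
        simpa [spec] using this
      have hAxsq : ∑ i, ((A * Bᵀ) i j) ^ 2 = ‖Matrix.toEuclideanLin A x‖ ^ 2 := by
        rw [EuclideanSpace.norm_eq, Real.sq_sqrt (by positivity)]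
        refine Finset.sum_congr rfl fun i _ => ?_
        have : (Matrix.toEuclideanLin A x) i = ∑ k, A i k * B j k := by
          simp [Matrix.toEuclideanLin_apply, x, Matrix.mulVec, dotProduct]
        rw [this]
        simp [Matrix.mul_apply, Real.norm_eq_abs, sq_abs]
      rw [hAxsq]
      calc ‖Matrix.toEuclideanLin A x‖ ^ 2 ≤ (spec A * ‖x‖) ^ 2 := by
            apply sq_le_sq' _ hAx
            have : 0 ≤ spec A * ‖x‖ := mul_nonneg (spec_nonneg A) (norm_nonneg x)
            linarith [norm_nonneg (Matrix.toEuclideanLin A x)]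
        _ = spec A ^ 2 * ∑ k, (B j k) ^ 2 := by rw [mul_pow, hx]
    calc ∑ j, ∑ i, ((A * Bᵀ) i j) ^ 2 ≤ ∑ j, spec A ^ 2 * ∑ k, (B j k) ^ 2 :=
          Finset.sum_le_sum fun j _ => key j
      _ = (spec A * frob B) ^ 2 := by
          rw [← Finset.mul_sum, mul_pow, frob, Real.sq_sqrt (by positivity)]
  calc frob (A * Bᵀ) = Real.sqrt (∑ i, ∑ j, ((A * Bᵀ) i j) ^ 2) := rfl
    _ ≤ Real.sqrt ((spec A * frob B) ^ 2) := Real.sqrt_le_sqrt h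
    _ = spec A * frob B := Real.sqrt_sq (mul_nonneg (spec_nonneg A) (frob_nonneg B))

lemma mip_sub_left (A B C : Matrix (Fin m) (Fin n) ℝ) :
    mip A C - mip B C = mip (A - B) C := by
  simp [mip, Matrix.transpose_sub, Matrix.sub_mul]

end aux

/-- For any `Γ ≥ σ₁(M*)`, the function `f(U) = (1/2)‖UUᵀ - M*‖_F²` is
`12Γ^{1/2}`-Hessian Lipschitz inside `{U : ‖U‖² < Γ}`. -/
theorem matrix_factorization_hessian_lipschitz {d r : ℕ}
    (M : Matrix (Fin d) (Fin d) ℝ) (hM : M.PosSemidef)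
    (Γ : ℝ) (hΓ : spec M ≤ Γ)
    (U V Z : Matrix (Fin d) (Fin r) ℝ)
    (hU : spec U ^ 2 < Γ) (hV : spec V ^ 2 < Γ) (hZ : frob Z ≤ 1) :
    |hessf M U Z - hessf M V Z| ≤ 12 * Real.sqrt Γ * frob (U - V) := by
  set sΓ := Real.sqrt Γ with hsΓ
  have hΓ0 : 0 ≤ Γ := le_of_lt (lt_of_le_of_lt (sq_nonneg _) hU)
  have hsU : spec U ≤ sΓ := by
    have := Real.sqrt_le_sqrt hU.le
    rwa [Real.sqrt_sq (spec_nonneg U)] at this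
  have hsV : spec V ≤ sΓ := by
    have := Real.sqrt_le_sqrt hV.le
    rwa [Real.sqrt_sq (spec_nonneg V)] at this
  have hsΓ0 : 0 ≤ sΓ := Real.sqrt_nonneg _
  set A := U * Zᵀ + Z * Uᵀ with hA
  set B := V * Zᵀ + Z * Vᵀ with hB
  set D := frob (U - V) with hD
  have hD0 : 0 ≤ D := frob_nonneg _
  have hZ0 : 0 ≤ frob Z := frob_nonneg _
  -- first term bound
  have hAB_sub : A - B = (U - V) * Zᵀ + Z * (U - V)ᵀ := by
    rw [hA, hB, Matrix.transpose_sub, Matrix.sub_mul, Matrix.mul_sub]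
    abel
  have hfABsub : frob (A - B) ≤ 2 * D := by
    rw [hAB_sub]
    calc frob ((U - V) * Zᵀ + Z * (U - V)ᵀ)
        ≤ frob ((U - V) * Zᵀ) + frob (Z * (U - V)ᵀ) := frob_add_le _ _
      _ ≤ frob (U - V) * frob Zᵀ + frob Z * frob (U - V)ᵀ := by
          gcongr <;> [exact frob_mul_le _ _; exact frob_mul_le _ _]
      _ = D * frob Z + frob Z * D := by rw [frob_transpose, frob_transpose]
      _ ≤ D * 1 + 1 * D := by gcongr
      _ = 2 * D := by ring
  have hfZUT : ∀ W : Matrix (Fin d) (Fin r) ℝ,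
      frob (W * Zᵀ + Z * Wᵀ) ≤ 2 * spec W * frob Z := by
    intro W
    calc frob (W * Zᵀ + Z * Wᵀ) ≤ frob (W * Zᵀ) + frob (Z * Wᵀ) := frob_add_le _ _
      _ = frob (W * Zᵀ) + frob (W * Zᵀ) := by
          rw [show Z * Wᵀ = (W * Zᵀ)ᵀ by rw [Matrix.transpose_mul, Matrix.transpose_transpose],
            frob_transpose]
      _ ≤ spec W * frob Z + spec W * frob Z := by
          gcongr <;> exact frob_mul_transpose_le W Z
      _ = 2 * spec W * frob Z := by ring
  have hfABadd : frob (A + B) ≤ 4 * sΓ := by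
    calc frob (A + B) ≤ frob A + frob B := frob_add_le _ _
      _ ≤ 2 * spec U * frob Z + 2 * spec V * frob Z := add_le_add (hfZUT U) (hfZUT V)
      _ ≤ 2 * sΓ * 1 + 2 * sΓ * 1 := by
          gcongr <;> first | exact hsU | exact hsV | exact hZ
      _ = 4 * sΓ := by ring
  have hT1 : |frob A ^ 2 - frob B ^ 2| ≤ 8 * sΓ * D := by
    have hinner : frob A ^ 2 - frob B ^ 2 = inner ℝ (emb A - emb B) (emb A + emb B) := by
      rw [frob_eq_norm_emb, frob_eq_norm_emb, inner_sub_left, inner_add_right, inner_add_right,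
        real_inner_self_eq_norm_sq, real_inner_self_eq_norm_sq, real_inner_comm (emb B) (emb A)]
      ring
    rw [hinner]
    calc |(inner ℝ (emb A - emb B) (emb A + emb B) : ℝ)|
        ≤ ‖emb A - emb B‖ * ‖emb A + emb B‖ := abs_real_inner_le_norm _ _
      _ = frob (A - B) * frob (A + B) := by
          rw [← emb_sub, ← emb_add, ← frob_eq_norm_emb, ← frob_eq_norm_emb]
      _ ≤ (2 * D) * (4 * sΓ) := by
          gcongr <;> first | exact frob_nonneg _ | exact hfABsub | exact hfABadd
      _ = 8 * sΓ * D := by ring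
  -- second term bound
  have hUV : U * Uᵀ - V * Vᵀ = U * (U - V)ᵀ + (U - V) * Vᵀ := by
    rw [Matrix.transpose_sub, Matrix.mul_sub, Matrix.sub_mul]
    abel
  have hfUV : frob (U * Uᵀ - V * Vᵀ) ≤ 2 * sΓ * D := by
    rw [hUV]
    calc frob (U * (U - V)ᵀ + (U - V) * Vᵀ)
        ≤ frob (U * (U - V)ᵀ) + frob ((U - V) * Vᵀ) := frob_add_le _ _
      _ = frob (U * (U - V)ᵀ) + frob (V * (U - V)ᵀ) := by
          rw [show (U - V) * Vᵀ = (V * (U - V)ᵀ)ᵀ by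
            rw [Matrix.transpose_mul, Matrix.transpose_transpose], frob_transpose]
      _ ≤ spec U * frob (U - V) + spec V * frob (U - V) := by
          gcongr <;> exact frob_mul_transpose_le _ _
      _ ≤ sΓ * D + sΓ * D := by gcongr
      _ = 2 * sΓ * D := by ring
  have hfZZ : frob (Z * Zᵀ) ≤ 1 := by
    calc frob (Z * Zᵀ) ≤ frob Z * frob Zᵀ := frob_mul_le _ _
      _ = frob Z * frob Z := by rw [frob_transpose]
      _ ≤ 1 * 1 := by gcongr
      _ = 1 := by ring
  have hT2 : |mip (U * Uᵀ - M) (Z * Zᵀ) - mip (V * Vᵀ - M) (Z * Zᵀ)| ≤ 2 * sΓ * D := by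
    rw [mip_sub_left, show (U * Uᵀ - M) - (V * Vᵀ - M) = U * Uᵀ - V * Vᵀ by abel]
    calc |mip (U * Uᵀ - V * Vᵀ) (Z * Zᵀ)|
        ≤ frob (U * Uᵀ - V * Vᵀ) * frob (Z * Zᵀ) := abs_mip_le _ _
      _ ≤ (2 * sΓ * D) * 1 := by
          gcongr <;> first | exact frob_nonneg _ | exact hfUV | exact hfZZ
      _ = 2 * sΓ * D := by ring
  -- combine
  have hdiff : hessf M U Z - hessf M V Z =
      (frob A ^ 2 - frob B ^ 2) +
        2 * (mip (U * Uᵀ - M) (Z * Zᵀ) - mip (V * Vᵀ - M) (Z * Zᵀ)) := by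
    simp only [hessf, hA, hB]; ring
  rw [hdiff]
  calc |(frob A ^ 2 - frob B ^ 2) +
        2 * (mip (U * Uᵀ - M) (Z * Zᵀ) - mip (V * Vᵀ - M) (Z * Zᵀ))|
      ≤ |frob A ^ 2 - frob B ^ 2| +
        |2 * (mip (U * Uᵀ - M) (Z * Zᵀ) - mip (V * Vᵀ - M) (Z * Zᵀ))| := abs_add_le _ _
    _ ≤ 8 * sΓ * D + 2 * (2 * sΓ * D) := by
        refine add_le_add hT1 ?_
        rw [abs_mul, abs_two]
        linarith [hT2]
    _ = 12 * sΓ * D := by ring
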